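/- Assume K ≥ 4 and N ≥ 4. For a uniformly random labeling L and any pairwise distinct s₁, s₂, s₃, s₄ ∈ {1,…,K}, the covariance of the cross-counts satisfies Cov(a_{s₁s₂}, a_{s₃s₄}) = 2·N_{s₁}N_{s₂}N_{s₃}N_{s₄}/((N−1)²(N−3)). -/

import Mathlib

open Finset Filter MeasureTheory ProbabilityTheory Topology

namespace Crossmatch

/-- First endpoint (index `2j`, i.e., the paper's `2j-1` in 1-based indexing) of the `j`-th
matched pair in the fixed perfect matching on `{1, …, 2I}`. -/
def ep1 {I : ℕ} (j : Fin I) : Fin (2 * I) := ⟨2 * j.val, by have := j.isLt; omega⟩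

/-- Second endpoint (index `2j+1`, i.e., the paper's `2j`) of the `j`-th matched pair. -/
def ep2 {I : ℕ} (j : Fin I) : Fin (2 * I) := ⟨2 * j.val + 1, by have := j.isLt; omega⟩

/-- The set of labelings `L : {1,…,2I} → {1,…,K}` assigning label `s` to exactly `Nc s`
indices, for every `s`. -/
def labelings (I K : ℕ) (Nc : Fin K → ℕ) : Finset (Fin (2 * I) → Fin K) :=
  univ.filter fun L => ∀ s : Fin K, (univ.filter fun i => L i = s).card = Nc s

/-- The count `a_{st}(L)`: the number of matched pairs `j` with `{L(2j-1), L(2j)} = {s,t}`.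
For `s ≠ t` this is the cross-count; for `s = t` it is the pure count (both endpoints labeled
`s`). -/
def crossCount (I K : ℕ) (L : Fin (2 * I) → Fin K) (s t : Fin K) : ℕ :=
  (univ.filter fun j : Fin I =>
    ({L (ep1 j), L (ep2 j)} : Finset (Fin K)) = ({s, t} : Finset (Fin K))).card

/-- Expectation of a real-valued statistic under a uniformly random labeling. -/
noncomputable def expct (I K : ℕ) (Nc : Fin K → ℕ)
    (X : (Fin (2 * I) → Fin K) → ℝ) : ℝ :=
  (∑ L ∈ labelings I K Nc, X L) / ((labelings I K Nc).card : ℝ)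

open Classical in
/-- Probability of an event under a uniformly random labeling. -/
noncomputable def pr (I K : ℕ) (Nc : Fin K → ℕ)
    (ev : (Fin (2 * I) → Fin K) → Prop) : ℝ :=
  (((labelings I K Nc).filter ev).card : ℝ) / ((labelings I K Nc).card : ℝ)

/-- Variance of a real-valued statistic under a uniformly random labeling. -/
noncomputable def variance (I K : ℕ) (Nc : Fin K → ℕ)
    (X : (Fin (2 * I) → Fin K) → ℝ) : ℝ :=
  expct I K Nc (fun L => (X L - expct I K Nc X) ^ 2)

/-- Covariance of two real-valued statistics under a uniformly random labeling. -/
noncomputable def covar (I K : ℕ) (Nc : Fin K → ℕ)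
    (X Y : (Fin (2 * I) → Fin K) → ℝ) : ℝ :=
  expct I K Nc (fun L => (X L - expct I K Nc X) * (Y L - expct I K Nc Y))

/-- The index set of (unordered) pairs `s < t`, indexing the cross-count vector. -/
abbrev Pairs (K : ℕ) := {q : Fin K × Fin K // q.1 < q.2}

/-- The covariance matrix of the cross-count vector `(a_{st})_{s<t}` under a uniformly
random labeling. -/
noncomputable def covMatrix (I K : ℕ) (Nc : Fin K → ℕ) :
    Matrix (Pairs K) (Pairs K) ℝ :=
  Matrix.of fun q r =>
    covar I K Nc (fun L => (crossCount I K L q.1.1 q.1.2 : ℝ))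
      (fun L => (crossCount I K L r.1.1 r.1.2 : ℝ))

lemma exists_perm_extend {m n : ℕ} (v w : Fin m → Fin n) (hv : Function.Injective v)
    (hw : Function.Injective w) : ∃ σ : Equiv.Perm (Fin n), ∀ a, σ (v a) = w a := by
  classical
  set f : Fin n → Fin n := fun i => if h : ∃ a, v a = i then w h.choose else i with hf
  have hst : (univ.image v).image f ⊆ univ := subset_univ _
  have hcard : Fintype.card (Fin n) = #(univ : Finset (Fin n)) := by simp
  have hkey : ∀ a : Fin m, f (v a) = w a := by
    intro a
    have h : ∃ b, v b = v a := ⟨a, rfl⟩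
    have : h.choose = a := hv h.choose_spec
    simp [hf, dif_pos h, this]
  have hinj : Set.InjOn f (univ.image v) := by
    intro x hx y hy hxy
    simp only [coe_image, Set.mem_image] at hx hy
    obtain ⟨a, -, rfl⟩ := hx
    obtain ⟨b, -, rfl⟩ := hy
    rw [hkey, hkey] at hxy
    exact congrArg v (hw hxy)
  obtain ⟨g, hg⟩ := Finset.exists_equiv_extend_of_card_eq hcard hst hinj
  refine ⟨g.trans (Equiv.subtypeUnivEquiv fun x => mem_univ x), fun a => ?_⟩
  have h1 := hg (v a) (mem_image_of_mem v (mem_univ a))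
  rw [Equiv.trans_apply]
  rw [show ((Equiv.subtypeUnivEquiv fun x => mem_univ x) (g (v a)) : Fin n)
      = (g (v a) : Fin n) from rfl]
  rw [h1, hkey]

lemma comp_perm_mem_labelings {I K : ℕ} {Nc : Fin K → ℕ} (σ : Equiv.Perm (Fin (2 * I)))
    {L : Fin (2 * I) → Fin K} (hL : L ∈ labelings I K Nc) :
    (L ∘ σ) ∈ labelings I K Nc := by
  simp only [labelings, mem_filter, mem_univ, true_and] at hL ⊢
  intro s
  rw [← hL s]
  apply Finset.card_bij' (fun i _ => σ i) (fun i _ => σ.symm i) <;> simp [Function.comp]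

lemma cnt_const {I K m : ℕ} (Nc : Fin K → ℕ) {v w : Fin m → Fin (2 * I)}
    (hv : Function.Injective v) (hw : Function.Injective w) (t : Fin m → Fin K) :
    ((labelings I K Nc).filter fun L => ∀ a, L (v a) = t a).card
      = ((labelings I K Nc).filter fun L => ∀ a, L (w a) = t a).card := by
  obtain ⟨σ, hσ⟩ := exists_perm_extend w v hw hv
  apply Finset.card_bij' (fun L _ => L ∘ σ) (fun L _ => L ∘ σ.symm)
  · intro L hL
    simp only [mem_filter] at hL ⊢
    refine ⟨comp_perm_mem_labelings σ hL.1, fun a => ?_⟩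
    simp only [Function.comp_apply, hσ a, hL.2 a]
  · intro L hL
    simp only [mem_filter] at hL ⊢
    refine ⟨comp_perm_mem_labelings σ.symm hL.1, fun a => ?_⟩
    have := hL.2 a
    simpa [Function.comp_apply, ← hσ a] using this
  · intro L _; funext i; simp
  · intro L _; funext i; simp

lemma cnt_total {I K m : ℕ} (Nc : Fin K → ℕ) {v : Fin m → Fin (2 * I)}
    (hv : Function.Injective v) {t : Fin m → Fin K} (ht : Function.Injective t) :
    ((labelings I K Nc).filter fun L => ∀ a, L (v a) = t a).card * ((2 * I).descFactorial m)
      = (labelings I K Nc).card * ∏ a, Nc (t a) := by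
  classical
  set lab := labelings I K Nc with hlab
  set Inj : Finset (Fin m → Fin (2 * I)) := univ.filter fun u => Function.Injective u with hInj
  have h2 : ∑ u ∈ Inj, (lab.filter fun L => ∀ a, L (u a) = t a).card
      = Inj.card * (lab.filter fun L => ∀ a, L (v a) = t a).card := by
    rw [Finset.sum_congr rfl (fun u hu => ?_), Finset.sum_const, smul_eq_mul]
    exact cnt_const Nc (by simpa [hInj] using hu) hv t
  have h3 : ∑ u ∈ Inj, (lab.filter fun L => ∀ a, L (u a) = t a).card
      = ∑ L ∈ lab, (Inj.filter fun u => ∀ a, L (u a) = t a).card := by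
    simp only [Finset.card_filter]
    exact Finset.sum_comm
  have h4 : ∀ L ∈ lab, (Inj.filter fun u => ∀ a, L (u a) = t a).card = ∏ a, Nc (t a) := by
    intro L hL
    have hLc : ∀ s : Fin K, (univ.filter fun i => L i = s).card = Nc s := by
      simpa [hlab, labelings] using (Finset.mem_filter.mp hL).2
    have e1 : (Inj.filter fun u => ∀ a, L (u a) = t a)
        = univ.filter fun u => ∀ a, L (u a) = t a := by
      rw [hInj, Finset.filter_filter]
      apply Finset.filter_congr
      intro u _
      constructor
      · exact fun h => h.2
      · intro h
        refine ⟨fun a b hab => ht ?_, h⟩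
        rw [← h a, ← h b, hab]
    have e2 : (univ.filter fun u => ∀ a, L (u a) = t a)
        = Fintype.piFinset (fun a => univ.filter fun i => L i = t a) := by
      ext u
      simp [Fintype.mem_piFinset]
    rw [e1, e2, Fintype.card_piFinset]
    exact Finset.prod_congr rfl fun a _ => hLc (t a)
  have h5 : Inj.card = (2 * I).descFactorial m := by
    rw [hInj, ← Fintype.card_subtype]
    rw [Fintype.card_congr (Equiv.subtypeInjectiveEquivEmbedding (Fin m) (Fin (2 * I)))]
    simp [Fintype.card_embedding_eq]
  rw [← h5, mul_comm, ← h2, h3]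
  rw [Finset.sum_congr rfl h4, Finset.sum_const, smul_eq_mul]

lemma labelings_nonempty {I K : ℕ} (Nc : Fin K → ℕ) (hNsum : ∑ s, Nc s = 2 * I) :
    (labelings I K Nc).Nonempty := by
  classical
  have hc : Fintype.card (Σ s : Fin K, Fin (Nc s)) = Fintype.card (Fin (2 * I)) := by
    simp [Fintype.card_sigma, hNsum]
  let e := Fintype.equivOfCardEq hc
  refine ⟨fun i => (e.symm i).1, ?_⟩
  simp only [labelings, mem_filter, mem_univ, true_and]
  intro s
  have step1 : (univ.filter fun i => (e.symm i).1 = s).card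
      = (univ.filter fun p : (Σ r : Fin K, Fin (Nc r)) => p.1 = s).card := by
    apply Finset.card_bij' (fun i _ => e.symm i) (fun p _ => e p) <;> simp
  have step2 : (univ.filter fun p : (Σ r : Fin K, Fin (Nc r)) => p.1 = s)
      = univ.image (Sigma.mk s) := by
    ext ⟨r, x⟩
    simp only [mem_filter, mem_univ, true_and, mem_image]
    constructor
    · rintro rfl; exact ⟨x, rfl⟩
    · rintro ⟨y, hy⟩; cases hy; rfl
  rw [step1, step2, Finset.card_image_of_injective _ sigma_mk_injective, card_univ,
    Fintype.card_fin]

lemma covar_eq {I K : ℕ} (Nc : Fin K → ℕ) (h : ((labelings I K Nc).card : ℝ) ≠ 0)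
    (X Y : (Fin (2 * I) → Fin K) → ℝ) :
    covar I K Nc X Y
      = expct I K Nc (fun L => X L * Y L) - expct I K Nc X * expct I K Nc Y := by
  unfold covar expct
  set C := ((labelings I K Nc).card : ℝ)
  set SX := ∑ L ∈ labelings I K Nc, X L
  set SY := ∑ L ∈ labelings I K Nc, Y L
  have expand : ∑ L ∈ labelings I K Nc, (X L - SX / C) * (Y L - SY / C)
      = (∑ L ∈ labelings I K Nc, X L * Y L) - (SX / C) * SY - (SY / C) * SX
        + C * ((SX / C) * (SY / C)) := by
    have hterm : ∀ L ∈ labelings I K Nc, (X L - SX / C) * (Y L - SY / C)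
        = X L * Y L - (SX / C) * Y L - (SY / C) * X L + (SX / C) * (SY / C) := by
      intro L _; ring
    rw [Finset.sum_congr rfl hterm]
    simp only [Finset.sum_add_distrib, Finset.sum_sub_distrib, ← Finset.mul_sum,
      Finset.sum_const, nsmul_eq_mul]
    ring
  rw [expand]
  field_simp
  ring

lemma pair_eq_pair_iff' {α : Type*} [DecidableEq α] {x y s t : α} (hst : s ≠ t) :
    ({x, y} : Finset α) = {s, t} ↔ (x = s ∧ y = t) ∨ (x = t ∧ y = s) := by
  constructor
  · intro h
    have hx : x = s ∨ x = t := by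
      have : x ∈ ({s, t} : Finset α) := by rw [← h]; simp
      simpa using this
    have hy : y = s ∨ y = t := by
      have : y ∈ ({s, t} : Finset α) := by rw [← h]; simp
      simpa using this
    have hs : s = x ∨ s = y := by
      have : s ∈ ({x, y} : Finset α) := by rw [h]; simp
      simpa using this
    have ht : t = x ∨ t = y := by
      have : t ∈ ({x, y} : Finset α) := by rw [h]; simp
      simpa using this
    rcases hx with rfl | rfl
    · rcases hy with rfl | rfl
      · rcases ht with rfl | rfl <;> simp_all
      · left; exact ⟨rfl, rfl⟩
    · rcases hy with rfl | rfl
      · right; exact ⟨rfl, rfl⟩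
      · rcases hs with rfl | rfl <;> simp_all
  · rintro (⟨rfl, rfl⟩ | ⟨rfl, rfl⟩)
    · rfl
    · exact Finset.pair_comm x y

lemma inj2 {α : Type*} {a b : α} (h : a ≠ b) : Function.Injective ![a, b] := by
  intro x y hxy
  fin_cases x <;> fin_cases y <;> simp_all

lemma inj4 {α : Type*} {a b c d : α} (h1 : a ≠ b) (h2 : a ≠ c) (h3 : a ≠ d)
    (h4 : b ≠ c) (h5 : b ≠ d) (h6 : c ≠ d) : Function.Injective ![a, b, c, d] := by
  intro x y hxy
  fin_cases x <;> fin_cases y <;> simp_all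

lemma forall_fin_four {p : Fin 4 → Prop} : (∀ a, p a) ↔ p 0 ∧ p 1 ∧ p 2 ∧ p 3 :=
  ⟨fun h => ⟨h 0, h 1, h 2, h 3⟩, by rintro ⟨h0, h1, h2, h3⟩ a; fin_cases a <;> assumption⟩

lemma count_two {I K : ℕ} (Nc : Fin K → ℕ) {e1 e2 : Fin (2 * I)} (he : e1 ≠ e2)
    {s t : Fin K} (hst : s ≠ t) :
    ((labelings I K Nc).filter fun L => L e1 = s ∧ L e2 = t).card * ((2 * I).descFactorial 2)
      = (labelings I K Nc).card * (Nc s * Nc t) := by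
  classical
  have h := cnt_total Nc (v := ![e1, e2]) (inj2 he) (t := ![s, t]) (inj2 hst)
  rw [show ((labelings I K Nc).filter fun L => L e1 = s ∧ L e2 = t)
      = (labelings I K Nc).filter (fun L => ∀ a, L (![e1, e2] a) = ![s, t] a) from
    Finset.filter_congr fun L _ => by simp [Fin.forall_fin_two]]
  rw [h, Fin.prod_univ_two]
  simp

lemma count_four {I K : ℕ} (Nc : Fin K → ℕ) {e1 e2 e3 e4 : Fin (2 * I)}
    (q12 : e1 ≠ e2) (q13 : e1 ≠ e3) (q14 : e1 ≠ e4) (q23 : e2 ≠ e3) (q24 : e2 ≠ e4)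
    (q34 : e3 ≠ e4) {t1 t2 t3 t4 : Fin K} (g12 : t1 ≠ t2) (g13 : t1 ≠ t3) (g14 : t1 ≠ t4)
    (g23 : t2 ≠ t3) (g24 : t2 ≠ t4) (g34 : t3 ≠ t4) :
    ((labelings I K Nc).filter fun L => (L e1 = t1 ∧ L e2 = t2) ∧ (L e3 = t3 ∧ L e4 = t4)).card
        * ((2 * I).descFactorial 4)
      = (labelings I K Nc).card * (Nc t1 * Nc t2 * Nc t3 * Nc t4) := by
  classical
  have h := cnt_total Nc (v := ![e1, e2, e3, e4]) (inj4 q12 q13 q14 q23 q24 q34)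
    (t := ![t1, t2, t3, t4]) (inj4 g12 g13 g14 g23 g24 g34)
  rw [show ((labelings I K Nc).filter fun L => (L e1 = t1 ∧ L e2 = t2) ∧ (L e3 = t3 ∧ L e4 = t4))
      = (labelings I K Nc).filter
          (fun L => ∀ a, L (![e1, e2, e3, e4] a) = ![t1, t2, t3, t4] a) from
    Finset.filter_congr fun L _ => by simp [forall_fin_four]; tauto]
  rw [h, Fin.prod_univ_four]
  simp [mul_assoc]
lemma ep_ne {I : ℕ} {j k : Fin I} (h : (j : ℕ) ≠ (k : ℕ) ∨ j = j) : True := trivial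

lemma count_pairev {I K : ℕ} (Nc : Fin K → ℕ) {s t : Fin K} (hst : s ≠ t) (j : Fin I) :
    ((labelings I K Nc).filter fun L =>
        ({L (ep1 j), L (ep2 j)} : Finset (Fin K)) = ({s, t} : Finset (Fin K))).card
        * ((2 * I).descFactorial 2)
      = (labelings I K Nc).card * (2 * (Nc s * Nc t)) := by
  classical
  have hep : ep1 j ≠ ep2 j := by
    intro h; have := congrArg Fin.val h; simp only [ep1, ep2] at this; omega
  have e0 : ((labelings I K Nc).filter fun L =>
        ({L (ep1 j), L (ep2 j)} : Finset (Fin K)) = ({s, t} : Finset (Fin K)))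
      = ((labelings I K Nc).filter fun L => L (ep1 j) = s ∧ L (ep2 j) = t)
        ∪ ((labelings I K Nc).filter fun L => L (ep1 j) = t ∧ L (ep2 j) = s) := by
    rw [← Finset.filter_or]
    exact Finset.filter_congr fun L _ => pair_eq_pair_iff' hst
  have hdisj : Disjoint ((labelings I K Nc).filter fun L => L (ep1 j) = s ∧ L (ep2 j) = t)
      ((labelings I K Nc).filter fun L => L (ep1 j) = t ∧ L (ep2 j) = s) :=
    Finset.disjoint_left.mpr fun L hA hB =>
      hst ((Finset.mem_filter.mp hA).2.1.symm.trans (Finset.mem_filter.mp hB).2.1)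
  rw [e0, Finset.card_union_of_disjoint hdisj, Nat.add_mul, count_two Nc hep hst,
    count_two Nc hep hst.symm]
  ring

set_option maxHeartbeats 1600000 in
lemma count_prodev {I K : ℕ} (Nc : Fin K → ℕ) {s₁ s₂ s₃ s₄ : Fin K}
    (h12 : s₁ ≠ s₂) (h13 : s₁ ≠ s₃) (h14 : s₁ ≠ s₄) (h23 : s₂ ≠ s₃) (h24 : s₂ ≠ s₄)
    (h34 : s₃ ≠ s₄) {j k : Fin I} (hjk : j ≠ k) :
    ((labelings I K Nc).filter fun L =>
        ({L (ep1 j), L (ep2 j)} : Finset (Fin K)) = ({s₁, s₂} : Finset (Fin K))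
          ∧ ({L (ep1 k), L (ep2 k)} : Finset (Fin K)) = ({s₃, s₄} : Finset (Fin K))).card
        * ((2 * I).descFactorial 4)
      = (labelings I K Nc).card * (4 * (Nc s₁ * Nc s₂ * Nc s₃ * Nc s₄)) := by
  classical
  have hjk' : (j : ℕ) ≠ (k : ℕ) := fun h => hjk (Fin.ext h)
  have q12 : ep1 j ≠ ep2 j := by
    intro h; have := congrArg Fin.val h; simp only [ep1, ep2] at this; omega
  have q13 : ep1 j ≠ ep1 k := by
    intro h; have := congrArg Fin.val h; simp only [ep1, ep2] at this; omega
  have q14 : ep1 j ≠ ep2 k := by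
    intro h; have := congrArg Fin.val h; simp only [ep1, ep2] at this; omega
  have q23 : ep2 j ≠ ep1 k := by
    intro h; have := congrArg Fin.val h; simp only [ep1, ep2] at this; omega
  have q24 : ep2 j ≠ ep2 k := by
    intro h; have := congrArg Fin.val h; simp only [ep1, ep2] at this; omega
  have q34 : ep1 k ≠ ep2 k := by
    intro h; have := congrArg Fin.val h; simp only [ep1, ep2] at this; omega
  set lab := labelings I K Nc with hlab
  set F1 := lab.filter fun L => (L (ep1 j) = s₁ ∧ L (ep2 j) = s₂) ∧ (L (ep1 k) = s₃ ∧ L (ep2 k) = s₄) with hF1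
  set F2 := lab.filter fun L => (L (ep1 j) = s₁ ∧ L (ep2 j) = s₂) ∧ (L (ep1 k) = s₄ ∧ L (ep2 k) = s₃) with hF2
  set F3 := lab.filter fun L => (L (ep1 j) = s₂ ∧ L (ep2 j) = s₁) ∧ (L (ep1 k) = s₃ ∧ L (ep2 k) = s₄) with hF3
  set F4 := lab.filter fun L => (L (ep1 j) = s₂ ∧ L (ep2 j) = s₁) ∧ (L (ep1 k) = s₄ ∧ L (ep2 k) = s₃) with hF4
  have e0 : (lab.filter fun L =>
        ({L (ep1 j), L (ep2 j)} : Finset (Fin K)) = ({s₁, s₂} : Finset (Fin K))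
          ∧ ({L (ep1 k), L (ep2 k)} : Finset (Fin K)) = ({s₃, s₄} : Finset (Fin K)))
      = (F1 ∪ F2) ∪ (F3 ∪ F4) := by
    rw [hF1, hF2, hF3, hF4, ← Finset.filter_or, ← Finset.filter_or, ← Finset.filter_or]
    exact Finset.filter_congr fun L _ => by
      rw [pair_eq_pair_iff' h12, pair_eq_pair_iff' h34]; tauto
  have d12 : Disjoint F1 F2 := Finset.disjoint_left.mpr fun L hA hB =>
    h34 ((Finset.mem_filter.mp hA).2.2.1.symm.trans (Finset.mem_filter.mp hB).2.2.1)
  have d34 : Disjoint F3 F4 := Finset.disjoint_left.mpr fun L hA hB =>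
    h34 ((Finset.mem_filter.mp hA).2.2.1.symm.trans (Finset.mem_filter.mp hB).2.2.1)
  have d12_34 : Disjoint (F1 ∪ F2) (F3 ∪ F4) := by
    have c13 : Disjoint F1 F3 := Finset.disjoint_left.mpr fun L hA hB =>
      h12 ((Finset.mem_filter.mp hA).2.1.1.symm.trans (Finset.mem_filter.mp hB).2.1.1)
    have c14 : Disjoint F1 F4 := Finset.disjoint_left.mpr fun L hA hB =>
      h12 ((Finset.mem_filter.mp hA).2.1.1.symm.trans (Finset.mem_filter.mp hB).2.1.1)
    have c23 : Disjoint F2 F3 := Finset.disjoint_left.mpr fun L hA hB =>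
      h12 ((Finset.mem_filter.mp hA).2.1.1.symm.trans (Finset.mem_filter.mp hB).2.1.1)
    have c24 : Disjoint F2 F4 := Finset.disjoint_left.mpr fun L hA hB =>
      h12 ((Finset.mem_filter.mp hA).2.1.1.symm.trans (Finset.mem_filter.mp hB).2.1.1)
    rw [Finset.disjoint_union_left]
    exact ⟨Finset.disjoint_union_right.mpr ⟨c13, c14⟩,
      Finset.disjoint_union_right.mpr ⟨c23, c24⟩⟩
  rw [e0, Finset.card_union_of_disjoint d12_34, Finset.card_union_of_disjoint d12,
    Finset.card_union_of_disjoint d34]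
  have c1 := count_four Nc q12 q13 q14 q23 q24 q34 h12 h13 h14 h23 h24 h34
  have c2 := count_four Nc q12 q13 q14 q23 q24 q34 h12 h14 h13 h24 h23 h34.symm
  have c3 := count_four Nc q12 q13 q14 q23 q24 q34 h12.symm h23 h24 h13 h14 h34
  have c4 := count_four Nc q12 q13 q14 q23 q24 q34 h12.symm h24 h23 h14 h13 h34.symm
  rw [hF1, hF2, hF3, hF4]
  rw [Nat.add_mul, Nat.add_mul, Nat.add_mul, c1, c2, c3, c4]
  ring
lemma boole_mul_boole {P Q : Prop} [Decidable P] [Decidable Q] :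
    (if P then (1 : ℝ) else 0) * (if Q then (1 : ℝ) else 0)
      = if P ∧ Q then (1 : ℝ) else 0 := by
  by_cases hP : P <;> by_cases hQ : Q <;> simp [hP, hQ]

set_option maxHeartbeats 1600000

/-- null covariance of two cross-counts on disjoint classes, for pairwise
distinct `s₁, s₂, s₃, s₄` and `N ≥ 4`. -/
theorem stmt5 (K I : ℕ) (hK : 4 ≤ K) (hI : 1 ≤ I) (hN : 4 ≤ 2 * I)
    (Nc : Fin K → ℕ) (hNpos : ∀ s, 0 < Nc s) (hNsum : ∑ s, Nc s = 2 * I)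
    (s₁ s₂ s₃ s₄ : Fin K) (h12 : s₁ ≠ s₂) (h13 : s₁ ≠ s₃) (h14 : s₁ ≠ s₄)
    (h23 : s₂ ≠ s₃) (h24 : s₂ ≠ s₄) (h34 : s₃ ≠ s₄) :
    covar I K Nc (fun L => (crossCount I K L s₁ s₂ : ℝ))
        (fun L => (crossCount I K L s₃ s₄ : ℝ))
      = 2 * ((Nc s₁ : ℝ) * (Nc s₂ : ℝ) * (Nc s₃ : ℝ) * (Nc s₄ : ℝ))
          / (((2 * I : ℝ) - 1) ^ 2 * ((2 * I : ℝ) - 3)) := by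
  classical
  have hI2 : 2 ≤ I := by omega
  have hne : (labelings I K Nc).Nonempty := labelings_nonempty Nc hNsum
  have hC0 : (((labelings I K Nc).card : ℕ) : ℝ) ≠ 0 :=
    Nat.cast_ne_zero.mpr (Finset.card_pos.mpr hne).ne'
  have hx2 : (2 : ℝ) ≤ (I : ℝ) := by exact_mod_cast hI2
  have hp0 : (0 : ℝ) < 2 * (I : ℝ) := by linarith
  have hp1 : (0 : ℝ) < 2 * (I : ℝ) - 1 := by linarith
  have hp2 : (0 : ℝ) < 2 * (I : ℝ) - 2 := by linarith
  have hp3 : (0 : ℝ) < 2 * (I : ℝ) - 3 := by linarith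
  have hd2 : (((2 * I).descFactorial 2 : ℕ) : ℝ) = (2 * (I : ℝ) - 1) * (2 * (I : ℝ)) := by
    have h : (2 * I).descFactorial 2 = (2 * I - 1) * (2 * I * 1) := rfl
    rw [h, Nat.cast_mul, Nat.cast_mul, Nat.cast_sub (by omega : 1 ≤ 2 * I)]
    push_cast; ring
  have hd4 : (((2 * I).descFactorial 4 : ℕ) : ℝ)
      = (2 * (I : ℝ) - 3) * ((2 * (I : ℝ) - 2) * ((2 * (I : ℝ) - 1) * (2 * (I : ℝ)))) := by
    have h : (2 * I).descFactorial 4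
        = (2 * I - 3) * ((2 * I - 2) * ((2 * I - 1) * (2 * I * 1))) := rfl
    rw [h, Nat.cast_mul, Nat.cast_mul, Nat.cast_mul, Nat.cast_mul,
      Nat.cast_sub (by omega : 3 ≤ 2 * I), Nat.cast_sub (by omega : 2 ≤ 2 * I),
      Nat.cast_sub (by omega : 1 ≤ 2 * I)]
    push_cast; ring
  have hd2ne : (((2 * I).descFactorial 2 : ℕ) : ℝ) ≠ 0 := by
    rw [hd2]; exact (mul_pos hp1 hp0).ne'
  have hd4ne : (((2 * I).descFactorial 4 : ℕ) : ℝ) ≠ 0 := by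
    rw [hd4]; exact (mul_pos hp3 (mul_pos hp2 (mul_pos hp1 hp0))).ne'
  have hrep : ∀ (s t : Fin K) (L : Fin (2 * I) → Fin K),
      ((crossCount I K L s t : ℕ) : ℝ)
        = ∑ j : Fin I, if ({L (ep1 j), L (ep2 j)} : Finset (Fin K))
            = ({s, t} : Finset (Fin K)) then (1 : ℝ) else 0 := by
    intro s t L
    unfold crossCount
    rw [Finset.card_filter]
    push_cast
    rfl
  -- expectation of a single cross-count
  have hEG : ∀ (s t : Fin K), s ≠ t →
      expct I K Nc (fun L => (crossCount I K L s t : ℝ))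
        = (I : ℝ) * (2 * ((Nc s : ℝ) * (Nc t : ℝ))) / (((2 * I).descFactorial 2 : ℕ) : ℝ) := by
    intro s t hst
    unfold expct
    rw [Finset.sum_congr rfl fun L _ => hrep s t L, Finset.sum_comm]
    have hinner : ∀ j : Fin I, (∑ L ∈ labelings I K Nc,
        if ({L (ep1 j), L (ep2 j)} : Finset (Fin K)) = ({s, t} : Finset (Fin K))
          then (1 : ℝ) else 0)
        = ((labelings I K Nc).card : ℝ) * (2 * ((Nc s : ℝ) * (Nc t : ℝ)))
            / (((2 * I).descFactorial 2 : ℕ) : ℝ) := by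
      intro j
      rw [Finset.sum_boole, eq_div_iff hd2ne]
      exact_mod_cast count_pairev Nc hst j
    rw [Finset.sum_congr rfl fun j _ => hinner j, Finset.sum_const, Finset.card_univ,
      Fintype.card_fin, nsmul_eq_mul]
    field_simp
  -- expectation of the product
  have hprod : expct I K Nc
      (fun L => (crossCount I K L s₁ s₂ : ℝ) * (crossCount I K L s₃ s₄ : ℝ))
      = (I : ℝ) * ((I : ℝ) - 1)
          * (4 * ((Nc s₁ : ℝ) * (Nc s₂ : ℝ) * (Nc s₃ : ℝ) * (Nc s₄ : ℝ)))
          / (((2 * I).descFactorial 4 : ℕ) : ℝ) := by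
    unfold expct
    have hterm : ∀ L ∈ labelings I K Nc,
        (crossCount I K L s₁ s₂ : ℝ) * (crossCount I K L s₃ s₄ : ℝ)
          = ∑ j : Fin I, ∑ k : Fin I,
              if (({L (ep1 j), L (ep2 j)} : Finset (Fin K)) = ({s₁, s₂} : Finset (Fin K))
                ∧ ({L (ep1 k), L (ep2 k)} : Finset (Fin K)) = ({s₃, s₄} : Finset (Fin K)))
                then (1 : ℝ) else 0 := by
      intro L _
      rw [hrep s₁ s₂ L, hrep s₃ s₄ L, Finset.sum_mul_sum]
      exact Finset.sum_congr rfl fun j _ => Finset.sum_congr rfl fun k _ => boole_mul_boole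
    rw [Finset.sum_congr rfl hterm]
    rw [Finset.sum_comm]
    rw [Finset.sum_congr rfl fun j (_ : j ∈ (Finset.univ : Finset (Fin I))) =>
      (Finset.sum_comm (s := labelings I K Nc) (t := (Finset.univ : Finset (Fin I)))
        (f := fun (L : Fin (2 * I) → Fin K) (k : Fin I) =>
        if (({L (ep1 j), L (ep2 j)} : Finset (Fin K)) = ({s₁, s₂} : Finset (Fin K))
          ∧ ({L (ep1 k), L (ep2 k)} : Finset (Fin K)) = ({s₃, s₄} : Finset (Fin K)))
          then (1 : ℝ) else 0))]
    have h2 : ∀ j k : Fin I, (∑ L ∈ labelings I K Nc,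
        if (({L (ep1 j), L (ep2 j)} : Finset (Fin K)) = ({s₁, s₂} : Finset (Fin K))
          ∧ ({L (ep1 k), L (ep2 k)} : Finset (Fin K)) = ({s₃, s₄} : Finset (Fin K)))
          then (1 : ℝ) else 0)
        = if j = k then 0
          else ((labelings I K Nc).card : ℝ)
            * (4 * ((Nc s₁ : ℝ) * (Nc s₂ : ℝ) * (Nc s₃ : ℝ) * (Nc s₄ : ℝ)))
            / (((2 * I).descFactorial 4 : ℕ) : ℝ) := by
      intro j k
      rw [Finset.sum_boole]
      split_ifs with hjk
      · subst hjk
        have h0 : ((labelings I K Nc).filter fun L =>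
            ({L (ep1 j), L (ep2 j)} : Finset (Fin K)) = ({s₁, s₂} : Finset (Fin K))
              ∧ ({L (ep1 j), L (ep2 j)} : Finset (Fin K)) = ({s₃, s₄} : Finset (Fin K))).card
            = 0 := by
          rw [Finset.card_eq_zero, Finset.filter_eq_empty_iff]
          rintro L _ ⟨hA, hB⟩
          have hEq : ({s₁, s₂} : Finset (Fin K)) = ({s₃, s₄} : Finset (Fin K)) :=
            hA.symm.trans hB
          have hmem : s₁ ∈ ({s₃, s₄} : Finset (Fin K)) := by
            rw [← hEq]; simp
          simp only [Finset.mem_insert, Finset.mem_singleton] at hmem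
          rcases hmem with h | h
          · exact h13 h
          · exact h14 h
        exact_mod_cast h0
      · rw [eq_div_iff hd4ne]
        exact_mod_cast count_prodev Nc h12 h13 h14 h23 h24 h34 hjk
    rw [Finset.sum_congr rfl fun j _ => Finset.sum_congr rfl fun k _ => h2 j k]
    have h3 : ∀ j : Fin I, (∑ k : Fin I, if j = k then (0 : ℝ)
        else ((labelings I K Nc).card : ℝ)
          * (4 * ((Nc s₁ : ℝ) * (Nc s₂ : ℝ) * (Nc s₃ : ℝ) * (Nc s₄ : ℝ)))
          / (((2 * I).descFactorial 4 : ℕ) : ℝ))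
        = ((I : ℝ) - 1) * (((labelings I K Nc).card : ℝ)
          * (4 * ((Nc s₁ : ℝ) * (Nc s₂ : ℝ) * (Nc s₃ : ℝ) * (Nc s₄ : ℝ)))
          / (((2 * I).descFactorial 4 : ℕ) : ℝ)) := by
      intro j
      set c : ℝ := ((labelings I K Nc).card : ℝ)
        * (4 * ((Nc s₁ : ℝ) * (Nc s₂ : ℝ) * (Nc s₃ : ℝ) * (Nc s₄ : ℝ)))
        / (((2 * I).descFactorial 4 : ℕ) : ℝ) with hc
      have step : ∀ k : Fin I, (if j = k then (0 : ℝ) else c)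
          = c - (if j = k then c else 0) := by
        intro k; split_ifs <;> ring
      rw [Finset.sum_congr rfl fun k _ => step k, Finset.sum_sub_distrib,
        Finset.sum_const, Finset.sum_ite_eq, if_pos (Finset.mem_univ j),
        Finset.card_univ, Fintype.card_fin, nsmul_eq_mul]
      ring
    rw [Finset.sum_congr rfl fun j _ => h3 j, Finset.sum_const, Finset.card_univ,
      Fintype.card_fin, nsmul_eq_mul]
    set d : ℝ := (((2 * I).descFactorial 4 : ℕ) : ℝ) with hd
    set C : ℝ := (((labelings I K Nc).card : ℕ) : ℝ) with hCs
    field_simp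
  rw [covar_eq Nc hC0]
  rw [hprod, hEG s₁ s₂ h12, hEG s₃ s₄ h34, hd2, hd4]
  have e1 : (2 * (I : ℝ)) ≠ 0 := hp0.ne'
  have e2 : (2 * (I : ℝ) - 1) ≠ 0 := hp1.ne'
  have e3 : (2 * (I : ℝ) - 2) ≠ 0 := hp2.ne'
  have e4 : (2 * (I : ℝ) - 3) ≠ 0 := hp3.ne'
  rw [div_mul_div_comm, div_sub_div _ _ (mul_ne_zero e4 (mul_ne_zero e3 (mul_ne_zero e2 e1)))
    (mul_ne_zero (mul_ne_zero e2 e1) (mul_ne_zero e2 e1)),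
    div_eq_div_iff (mul_ne_zero (mul_ne_zero e4 (mul_ne_zero e3 (mul_ne_zero e2 e1)))
      (mul_ne_zero (mul_ne_zero e2 e1) (mul_ne_zero e2 e1))) (mul_ne_zero (pow_ne_zero 2 e2) e4)]
  ring

end Crossmatch
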